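/- Let Φ = (A; A*; {E_i}; {E*_i}) be a Leonard system in 𝒜 ≅ Mat_{d+1}(K), let V be an irreducible 𝒜-module, and let v be a nonzero vector in E*_0 V. Then for 0 ≤ i ≤ d the vector E*_i A^i v is nonzero, hence a basis of the one-dimensional space E*_i V, and the sequence E*_0 A^0 v, E*_1 A^1 v, …, E*_d A^d v is a basis of V. -/

import Mathlib

open Matrix Polynomial

def IsTridiag {K : Type*} [Field K] {n : ℕ} (M : Matrix (Fin n) (Fin n) K) : Prop :=
  ∀ i j : Fin n, ((i : ℕ) + 1 < j ∨ (j : ℕ) + 1 < i) → M i j = 0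

def IsIrredTridiag {K : Type*} [Field K] {n : ℕ} (M : Matrix (Fin n) (Fin n) K) : Prop :=
  IsTridiag M ∧ ∀ i j : Fin n, ((i : ℕ) + 1 = j ∨ (j : ℕ) + 1 = i) → M i j ≠ 0

/-- Entry of a matrix with natural-number indices; `0` when out of range. -/
def mentry {K : Type*} [Field K] {n : ℕ} (M : Matrix (Fin n) (Fin n) K) (i j : ℕ) : K :=
  if h : i < n ∧ j < n then M ⟨i, h.1⟩ ⟨j, h.2⟩ else 0

/-- A family indexed by `Fin (d+1)` viewed as indexed by `ℕ`, with value `0` out of range. -/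
def natIdx {d : ℕ} {M : Type*} [Zero M] (E : Fin (d+1) → M) (n : ℕ) : M :=
  if h : n < d + 1 then E ⟨n, h⟩ else 0

/-- A Leonard system of diameter `d` in the matrix algebra `Mat_{d+1}(K)`:
`A`, `As` are multiplicity-free with eigenvalues `θ i`, `θs i` and primitive
idempotents `E i`, `Es i`, satisfying the tridiagonal conditions. -/
structure LeonardSystem (K : Type*) [Field K] (d : ℕ) where
  A : Matrix (Fin (d+1)) (Fin (d+1)) K
  As : Matrix (Fin (d+1)) (Fin (d+1)) K
  E : Fin (d+1) → Matrix (Fin (d+1)) (Fin (d+1)) K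
  Es : Fin (d+1) → Matrix (Fin (d+1)) (Fin (d+1)) K
  θ : Fin (d+1) → K
  θs : Fin (d+1) → K
  θ_inj : Function.Injective θ
  θs_inj : Function.Injective θs
  E_ne : ∀ i, E i ≠ 0
  Es_ne : ∀ i, Es i ≠ 0
  E_mul : ∀ i j, E i * E j = if i = j then E i else 0
  Es_mul : ∀ i j, Es i * Es j = if i = j then Es i else 0
  E_sum : ∑ i, E i = 1
  Es_sum : ∑ i, Es i = 1
  A_eq : A = ∑ i, θ i • E i
  As_eq : As = ∑ i, θs i • Es i
  EAsE_zero : ∀ i j : Fin (d+1), ((i:ℕ) + 1 < j ∨ (j:ℕ) + 1 < i) → E i * As * E j = 0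
  EAsE_ne : ∀ i j : Fin (d+1), ((i:ℕ) + 1 = j ∨ (j:ℕ) + 1 = i) → E i * As * E j ≠ 0
  EsAEs_zero : ∀ i j : Fin (d+1), ((i:ℕ) + 1 < j ∨ (j:ℕ) + 1 < i) → Es i * A * Es j = 0
  EsAEs_ne : ∀ i j : Fin (d+1), ((i:ℕ) + 1 = j ∨ (j:ℕ) + 1 = i) → Es i * A * Es j ≠ 0

/-- A Leonard pair in `Mat_{d+1}(K)`. -/
structure LeonardPair (K : Type*) [Field K] (d : ℕ) where
  A : Matrix (Fin (d+1)) (Fin (d+1)) K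
  As : Matrix (Fin (d+1)) (Fin (d+1)) K
  cond1 : ∃ P : Matrix (Fin (d+1)) (Fin (d+1)) K, IsUnit P ∧
    IsIrredTridiag (P⁻¹ * A * P) ∧ (P⁻¹ * As * P).IsDiag
  cond2 : ∃ P : Matrix (Fin (d+1)) (Fin (d+1)) K, IsUnit P ∧
    (P⁻¹ * A * P).IsDiag ∧ IsIrredTridiag (P⁻¹ * As * P)

section Aux

variable {K : Type*} [Field K]

lemma sum_mulVec' {n : Type*} [Fintype n] {ι : Type*} (s : Finset ι)
    (M : ι → Matrix n n K) (w : n → K) :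
    (∑ k ∈ s, M k) *ᵥ w = ∑ k ∈ s, (M k *ᵥ w) := by
  classical
  induction s using Finset.induction_on with
  | empty => simp
  | insert _ _ h ih =>
    rename_i a s'
    rw [Finset.sum_insert h, Finset.sum_insert h, Matrix.add_mulVec, ih]

lemma mulVec_sum' {n : Type*} [Fintype n] {ι : Type*} (s : Finset ι)
    (M : Matrix n n K) (w : ι → n → K) :
    M *ᵥ (∑ k ∈ s, w k) = ∑ k ∈ s, (M *ᵥ w k) := by
  classical
  induction s using Finset.induction_on with
  | empty => simp
  | insert _ _ h ih =>
    rename_i a s'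
    rw [Finset.sum_insert h, Finset.sum_insert h, Matrix.mulVec_add, ih]

lemma ne_zero_exists_mulVec {n : Type*} [Fintype n] [DecidableEq n]
    {M : Matrix n n K} (hM : M ≠ 0) : ∃ w : n → K, M *ᵥ w ≠ 0 := by
  by_contra h
  push_neg at h
  apply hM
  ext i j
  have := congrFun (h (Pi.single j 1)) i
  simpa [Matrix.mulVec_single] using this

end Aux

theorem stmt9 {K : Type*} [Field K] {d : ℕ} (L : LeonardSystem K d)
    (v : Fin (d+1) → K) (hv : L.Es 0 *ᵥ v = v) (hv0 : v ≠ 0) :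
    (∀ i : Fin (d+1), (L.Es i * L.A ^ (i:ℕ)) *ᵥ v ≠ 0) ∧
    (∀ i : Fin (d+1), ∀ w : Fin (d+1) → K, L.Es i *ᵥ w = w →
      ∃ c : K, w = c • ((L.Es i * L.A ^ (i:ℕ)) *ᵥ v)) ∧
    LinearIndependent K (fun i : Fin (d+1) => (L.Es i * L.A ^ (i:ℕ)) *ᵥ v) ∧
    Submodule.span K (Set.range (fun i : Fin (d+1) => (L.Es i * L.A ^ (i:ℕ)) *ᵥ v)) = ⊤ := by
  classical
  have hidem : ∀ i, L.Es i * L.Es i = L.Es i := by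
    intro i; simpa using L.Es_mul i i
  have horth : ∀ i j, i ≠ j → L.Es i * L.Es j = 0 := by
    intro i j hij; simpa [hij] using L.Es_mul i j
  -- choose a nonzero vector z i in the image of Es i
  have hzex : ∀ i : Fin (d+1), ∃ z : Fin (d+1) → K, L.Es i *ᵥ z = z ∧ z ≠ 0 := by
    intro i
    obtain ⟨w, hw⟩ := ne_zero_exists_mulVec (L.Es_ne i)
    refine ⟨L.Es i *ᵥ w, ?_, hw⟩
    rw [Matrix.mulVec_mulVec, hidem]
  choose z hz hz0 using hzex
  have hzEs : ∀ i j : Fin (d+1), L.Es j *ᵥ z i = if j = i then z i else 0 := by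
    intro i j
    by_cases h : j = i
    · subst h; simp [hz j]
    · rw [if_neg h, ← hz i, Matrix.mulVec_mulVec, horth j i h, Matrix.zero_mulVec]
  -- z is linearly independent, hence spans
  have hzli : LinearIndependent K z := by
    rw [Fintype.linearIndependent_iff]
    intro g hg i
    have h1 : L.Es i *ᵥ (∑ j, g j • z j) = g i • z i := by
      rw [mulVec_sum']
      rw [Finset.sum_congr rfl (fun j _ => by rw [Matrix.mulVec_smul, hzEs])]
      simp
    rw [hg, Matrix.mulVec_zero] at h1
    rcases smul_eq_zero.mp h1.symm with h' | h'
    · exact h'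
    · exact absurd h' (hz0 i)
  have hzspan : Submodule.span K (Set.range z) = ⊤ :=
    hzli.span_eq_top_of_card_eq_finrank (by simp [Module.finrank_fin_fun])
  -- key: the image of Es i is contained in the span of z i
  have hP : ∀ (i : Fin (d+1)) (w : Fin (d+1) → K), ∃ c : K, L.Es i *ᵥ w = c • z i := by
    intro i w
    have hw : w ∈ Submodule.span K (Set.range z) := hzspan ▸ Submodule.mem_top
    obtain ⟨c, hc⟩ := (Submodule.mem_span_range_iff_exists_fun K).mp hw
    refine ⟨c i, ?_⟩
    rw [← hc, mulVec_sum']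
    rw [Finset.sum_congr rfl (fun j _ => by rw [Matrix.mulVec_smul, hzEs])]
    simp
  -- vanishing lemma: Es j kills A^n v for j > n
  have hV : ∀ (n : ℕ) (j : Fin (d+1)), n < (j:ℕ) → L.Es j *ᵥ (L.A ^ n *ᵥ v) = 0 := by
    intro n
    induction n with
    | zero =>
      intro j hj
      have hj0 : j ≠ 0 := by
        intro h; subst h; simp at hj
      rw [pow_zero, Matrix.one_mulVec, ← hv, Matrix.mulVec_mulVec,
        horth j 0 hj0, Matrix.zero_mulVec]
    | succ n ih =>
      intro j hj
      have key : L.Es j * L.A = ∑ k, L.Es j * L.A * L.Es k := by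
        rw [← Finset.mul_sum, L.Es_sum, mul_one]
      have h2 : L.Es j *ᵥ (L.A ^ (n+1) *ᵥ v)
          = ∑ k, (L.Es j * L.A * L.Es k) *ᵥ (L.A ^ n *ᵥ v) := by
        rw [pow_succ', ← Matrix.mulVec_mulVec v L.A (L.A ^ n),
          Matrix.mulVec_mulVec (L.A ^ n *ᵥ v) (L.Es j) L.A]
        conv_lhs => rw [key]
        rw [sum_mulVec']
      rw [h2]
      refine Finset.sum_eq_zero (fun k _ => ?_)
      rcases lt_or_ge n (k:ℕ) with hk | hk
      · rw [← Matrix.mulVec_mulVec (L.A ^ n *ᵥ v) (L.Es j * L.A) (L.Es k), ih k hk,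
          Matrix.mulVec_zero]
      · rw [L.EsAEs_zero j k (Or.inr (by omega)), Matrix.zero_mulVec]
  set u : Fin (d+1) → (Fin (d+1) → K) := fun i => (L.Es i * L.A ^ (i:ℕ)) *ᵥ v with hu_def
  have hu_eq : ∀ i : Fin (d+1), u i = L.Es i *ᵥ (L.A ^ (i:ℕ) *ᵥ v) :=
    fun i => (Matrix.mulVec_mulVec v (L.Es i) (L.A ^ (i:ℕ))).symm
  -- the recursion and nonvanishing
  have hne : ∀ (n : ℕ) (h : n < d+1), u ⟨n, h⟩ ≠ 0 := by
    intro n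
    induction n with
    | zero =>
      intro h
      have h0 : u ⟨0, h⟩ = v := by
        rw [hu_eq]
        simpa using hv
      rw [h0]; exact hv0
    | succ n ih =>
      intro h
      have hn : n < d + 1 := Nat.lt_of_succ_lt h
      set i : Fin (d+1) := ⟨n, hn⟩ with hi_def
      set i1 : Fin (d+1) := ⟨n+1, h⟩ with hi1_def
      have hiv : (i : ℕ) = n := rfl
      have hi1v : (i1 : ℕ) = n + 1 := rfl
      have stepA : u i1 = (L.Es i1 * L.A * L.Es i) *ᵥ (L.A ^ n *ᵥ v) := by
        have key : L.Es i1 * L.A = ∑ k, L.Es i1 * L.A * L.Es k := by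
          rw [← Finset.mul_sum, L.Es_sum, mul_one]
        have h1 : u i1 = ∑ k, (L.Es i1 * L.A * L.Es k) *ᵥ (L.A ^ n *ᵥ v) := by
          rw [hu_eq, hi1v, pow_succ', ← Matrix.mulVec_mulVec v L.A (L.A ^ n),
            Matrix.mulVec_mulVec (L.A ^ n *ᵥ v) (L.Es i1) L.A]
          conv_lhs => rw [key]
          rw [sum_mulVec']
        rw [h1]
        refine Finset.sum_eq_single i (fun k _ hk => ?_) (by simp)
        have hkn : (k:ℕ) ≠ n := fun hh => hk (Fin.ext (by rw [hh, hiv]))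
        rcases lt_or_ge n (k:ℕ) with hlt | hle
        · rw [← Matrix.mulVec_mulVec (L.A ^ n *ᵥ v) (L.Es i1 * L.A) (L.Es k), hV n k hlt,
            Matrix.mulVec_zero]
        · rw [L.EsAEs_zero i1 k (Or.inr (by rw [hi1v]; omega)), Matrix.zero_mulVec]
      obtain ⟨c, hc⟩ := hP i (L.A ^ n *ᵥ v)
      have hui : u i = c • z i := by rw [hu_eq, hiv]; exact hc
      have hc0 : c ≠ 0 := by
        intro hcc
        exact ih hn (by rw [show u ⟨n, hn⟩ = u i from rfl, hui, hcc, zero_smul])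
      have ht : (L.Es i1 * L.A) *ᵥ z i ≠ 0 := by
        obtain ⟨w', hw'⟩ := ne_zero_exists_mulVec
          (L.EsAEs_ne i1 i (Or.inr (by rw [hiv, hi1v])))
        obtain ⟨c', hc'⟩ := hP i w'
        intro hzero
        apply hw'
        rw [← Matrix.mulVec_mulVec w' (L.Es i1 * L.A) (L.Es i), hc', Matrix.mulVec_smul,
          hzero, smul_zero]
      rw [stepA, ← Matrix.mulVec_mulVec (L.A ^ n *ᵥ v) (L.Es i1 * L.A) (L.Es i),
        hc, Matrix.mulVec_smul]
      intro hh
      rcases smul_eq_zero.mp hh with h' | h'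
      · exact hc0 h'
      · exact ht h'
  have hune : ∀ i : Fin (d+1), u i ≠ 0 := fun i => by
    have := hne i i.2
    simpa using this
  -- Es j acts on u i as delta
  have hEu : ∀ j i : Fin (d+1), L.Es j *ᵥ u i = if j = i then u i else 0 := by
    intro j i
    have h0 : L.Es j *ᵥ u i = (L.Es j * (L.Es i * L.A ^ (i:ℕ))) *ᵥ v :=
      Matrix.mulVec_mulVec v (L.Es j) _
    rw [h0, ← mul_assoc, L.Es_mul j i]
    by_cases h' : j = i
    · subst h'; rw [if_pos rfl, if_pos rfl]
    · rw [if_neg h', if_neg h', zero_mul, Matrix.zero_mulVec]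
  -- claim 2
  have hclaim2 : ∀ i : Fin (d+1), ∀ w : Fin (d+1) → K, L.Es i *ᵥ w = w →
      ∃ c : K, w = c • u i := by
    intro i w hw
    obtain ⟨c, hc⟩ := hP i w
    obtain ⟨c', hc'⟩ := hP i (L.A ^ (i:ℕ) *ᵥ v)
    have hui : u i = c' • z i := by rw [hu_eq]; exact hc'
    have hc'0 : c' ≠ 0 := fun hh => hune i (by rw [hui, hh, zero_smul])
    refine ⟨c * c'⁻¹, ?_⟩
    rw [← hw, hc, hui, smul_smul, mul_assoc, inv_mul_cancel₀ hc'0, mul_one]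
  -- linear independence
  have huli : LinearIndependent K u := by
    rw [Fintype.linearIndependent_iff]
    intro g hg i
    have h1 : L.Es i *ᵥ (∑ j, g j • u j) = g i • u i := by
      rw [mulVec_sum']
      rw [Finset.sum_congr rfl (fun j _ => by rw [Matrix.mulVec_smul, hEu])]
      simp
    rw [hg, Matrix.mulVec_zero] at h1
    rcases smul_eq_zero.mp h1.symm with h' | h'
    · exact h'
    · exact absurd h' (hune i)
  exact ⟨hune, hclaim2, huli,
    huli.span_eq_top_of_card_eq_finrank (by simp [Module.finrank_fin_fun])⟩
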